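/- For every k ∈ ℕ₀ and t > 0, there exists a polynomial p_k of degree k with positive coefficients, with p_0 = 1 and p_k(0) = 0 for k ≥ 1, such that Σ_{n ∈ ℤ} n^{2k}·I_n(t) = e^t·p_k(t); moreover Σ_{n ∈ ℤ} n^{2k+1}·I_n(t) = 0. -/

import Mathlib

open Finset

/-- The modified Bessel function of the first kind of integer order:
`I_n(t) = Σ_{m=0}^∞ (t/2)^{2m+|n|} / (m! (m+|n|)!)`, with `I_{-n} = I_n`. -/
noncomputable def besselI (n : ℤ) (t : ℝ) : ℝ :=
  ∑' m : ℕ, (t / 2) ^ (2 * m + n.natAbs) / (m.factorial * (m + n.natAbs).factorial)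

namespace BesselAux

/-- the generic term of the double sum -/
noncomputable def g (x : ℝ) (m : ℕ) (p : ℕ × ℕ) : ℝ :=
  ((p.2 : ℝ) - p.1) ^ m * x ^ (p.1 + p.2) / (p.1.factorial * p.2.factorial)

lemma exists_pow_le (m : ℕ) : ∃ C : ℝ, 0 < C ∧ ∀ n : ℕ, (n : ℝ) ^ m ≤ C * 2 ^ n := by
  have h := tendsto_pow_const_div_const_pow_of_one_lt m (r := 2) one_lt_two
  obtain ⟨C, hC⟩ := h.bddAbove_range
  refine ⟨max C 1, lt_of_lt_of_le one_pos (le_max_right _ _), fun n => ?_⟩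
  have h1 : (n:ℝ)^m / 2^n ≤ C := hC (Set.mem_range_self n)
  have h2 : (0:ℝ) < 2^n := by positivity
  calc (n:ℝ)^m = ((n:ℝ)^m / 2^n) * 2^n := by field_simp
    _ ≤ C * 2^n := by gcongr
    _ ≤ max C 1 * 2^n := by gcongr; exact le_max_left _ _

lemma summable_weight (x : ℝ) (hx : 0 ≤ x) (m : ℕ) :
    Summable fun p : ℕ × ℕ =>
      ((p.1 + p.2 : ℕ) : ℝ) ^ m * x ^ (p.1 + p.2) / (p.1.factorial * p.2.factorial) := by
  obtain ⟨C, hC0, hC⟩ := exists_pow_le m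
  have hv : Summable fun n : ℕ => (2*x) ^ n / n.factorial := Real.summable_pow_div_factorial _
  have hv' : Summable fun n : ℕ => C * ((2*x) ^ n / n.factorial) := hv.mul_left C
  have hprod : Summable fun p : ℕ × ℕ =>
      (C * ((2*x) ^ p.1 / p.1.factorial)) * ((2*x) ^ p.2 / p.2.factorial) := by
    refine hv'.mul_of_nonneg hv (fun n => ?_) (fun n => ?_) <;> positivity
  refine hprod.of_nonneg_of_le (fun p => by positivity) (fun p => ?_)
  obtain ⟨a, b⟩ := p
  have key : ((a + b : ℕ) : ℝ) ^ m ≤ C * 2 ^ (a + b) := hC (a+b)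
  have h2 : (2*x) ^ a / a.factorial * ((2*x) ^ b / b.factorial)
      = (2 ^ (a+b) * x ^ (a+b)) / (a.factorial * b.factorial) := by
    rw [mul_pow (2:ℝ) x, pow_add, pow_add]; ring
  calc ((a + b : ℕ) : ℝ) ^ m * x ^ (a + b) / (a.factorial * b.factorial)
      ≤ (C * 2 ^ (a+b)) * x ^ (a + b) / (a.factorial * b.factorial) := by
        gcongr
    _ = C * ((2*x) ^ a / a.factorial) * ((2*x) ^ b / b.factorial) := by
        field_simp
        rw [mul_pow (2:ℝ) x, pow_add, pow_add]
        ring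

lemma abs_sub_le_add (a b : ℕ) : |(b : ℝ) - a| ≤ ((a + b : ℕ) : ℝ) := by
  rw [abs_le]; push_cast; constructor <;> nlinarith [Nat.cast_nonneg (α := ℝ) a, Nat.cast_nonneg (α := ℝ) b]

lemma summable_g (x : ℝ) (hx : 0 ≤ x) (m : ℕ) : Summable (g x m) := by
  refine (summable_weight x hx m).of_norm_bounded (fun p => ?_)
  obtain ⟨a, b⟩ := p
  have h1 : ‖g x m (a, b)‖ = |(b:ℝ) - a| ^ m * x ^ (a + b) / (a.factorial * b.factorial) := by
    rw [g, Real.norm_eq_abs, abs_div, abs_mul, abs_pow, abs_of_nonneg (pow_nonneg hx _),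
      abs_of_nonneg (by positivity : (0:ℝ) ≤ (a.factorial : ℝ) * b.factorial)]
  rw [h1, div_le_div_iff_of_pos_right (by positivity)]
  exact mul_le_mul_of_nonneg_right
    (pow_le_pow_left₀ (abs_nonneg _) (abs_sub_le_add a b) m) (pow_nonneg hx _)

lemma summable_g_weighted (x : ℝ) (hx : 0 ≤ x) (m : ℕ) (w : ℕ × ℕ → ℕ)
    (hw : ∀ p, w p ≤ p.1 + p.2) :
    Summable fun p : ℕ × ℕ =>
      ((p.2 : ℝ) - p.1) ^ m * (w p) * x ^ (p.1 + p.2) / (p.1.factorial * p.2.factorial) := by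
  refine (summable_weight x hx (m+1)).of_norm_bounded (fun p => ?_)
  obtain ⟨a, b⟩ := p
  have h1 : ‖((b : ℝ) - a) ^ m * (w (a,b)) * x ^ (a + b) / (a.factorial * b.factorial)‖
      = |(b:ℝ) - a| ^ m * (w (a,b)) * x ^ (a + b) / (a.factorial * b.factorial) := by
    rw [Real.norm_eq_abs, abs_div, abs_mul, abs_mul, abs_pow, abs_of_nonneg (pow_nonneg hx _),
      Nat.abs_cast,
      abs_of_nonneg (by positivity : (0:ℝ) ≤ (a.factorial : ℝ) * b.factorial)]
  rw [h1, pow_succ, div_le_div_iff_of_pos_right (by positivity)]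
  have h2 : |(b:ℝ) - a| ^ m * (w (a,b)) ≤ ((a + b : ℕ) : ℝ) ^ m * ((a + b : ℕ) : ℝ) := by
    have := pow_le_pow_left₀ (abs_nonneg ((b:ℝ) - a)) (abs_sub_le_add a b) m
    have h3 : ((w (a,b) : ℕ) : ℝ) ≤ ((a + b : ℕ) : ℝ) := by exact_mod_cast hw (a,b)
    exact mul_le_mul this h3 (Nat.cast_nonneg _) (by positivity)
  exact mul_le_mul_of_nonneg_right h2 (pow_nonneg hx _)

/-- the double sum -/
noncomputable def S (x : ℝ) (m : ℕ) : ℝ := ∑' p : ℕ × ℕ, g x m p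

lemma S_zero (x : ℝ) (hx : 0 ≤ x) : S x 0 = Real.exp (2 * x) := by
  have hnorm : Summable fun n : ℕ => ‖x ^ n / n.factorial‖ := by
    simpa [Real.norm_eq_abs, abs_div, abs_pow, Nat.abs_cast] using
      Real.summable_pow_div_factorial |x|
  have hexp : ∑' n : ℕ, x ^ n / n.factorial = Real.exp x := by
    rw [Real.exp_eq_exp_ℝ, NormedSpace.exp_eq_tsum_div]
  have := tsum_mul_tsum_of_summable_norm (R := ℝ) hnorm hnorm
  rw [hexp] at this
  have h2 : S x 0 = ∑' z : ℕ × ℕ, (x ^ z.1 / z.1.factorial) * (x ^ z.2 / z.2.factorial) := by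
    refine tsum_congr (fun p => ?_)
    rw [g, pow_zero, one_mul, pow_add]
    ring
  rw [h2, ← this, ← Real.exp_add, two_mul]

lemma S_odd (x : ℝ) (k : ℕ) : S x (2 * k + 1) = 0 := by
  have h := (Equiv.prodComm ℕ ℕ).tsum_eq (g x (2 * k + 1))
  have hpt : ∀ p : ℕ × ℕ, g x (2 * k + 1) ((Equiv.prodComm ℕ ℕ) p) = -(g x (2 * k + 1) p) := by
    rintro ⟨a, b⟩
    simp only [Equiv.prodComm_apply, Prod.swap_prod_mk, g]
    rw [show ((a : ℝ) - b) = -((b : ℝ) - a) by ring, Odd.neg_pow ⟨k, by ring⟩]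
    ring
  rw [tsum_congr hpt, tsum_neg] at h
  have : S x (2 * k + 1) = -(S x (2 * k + 1)) := h.symm
  linarith

lemma fact_ne (n : ℕ) : ((n.factorial : ℕ) : ℝ) ≠ 0 := by
  exact_mod_cast n.factorial_ne_zero

lemma S_succ (x : ℝ) (hx : 0 ≤ x) (m : ℕ) :
    S x (m + 1) = x * ∑ j ∈ range (m + 1),
      (m.choose j : ℝ) * (1 - (-1 : ℝ) ^ (m - j)) * S x j := by
  set Gb : ℕ × ℕ → ℝ := fun p =>
    ((p.2 : ℝ) - p.1) ^ m * p.2 * x ^ (p.1 + p.2) / (p.1.factorial * p.2.factorial) with hGb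
  set Ga : ℕ × ℕ → ℝ := fun p =>
    ((p.2 : ℝ) - p.1) ^ m * p.1 * x ^ (p.1 + p.2) / (p.1.factorial * p.2.factorial) with hGa
  have hsGb : Summable Gb := summable_g_weighted x hx m (fun p => p.2) (fun p => Nat.le_add_left _ _)
  have hsGa : Summable Ga := summable_g_weighted x hx m (fun p => p.1) (fun p => Nat.le_add_right _ _)
  have hsplit : ∀ p : ℕ × ℕ, g x (m + 1) p = Gb p - Ga p := by
    rintro ⟨a, b⟩
    simp only [g, hGb, hGa, pow_succ]
    ring
  have hS : S x (m + 1) = (∑' p, Gb p) - ∑' p, Ga p := by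
    rw [S, tsum_congr hsplit, Summable.tsum_sub hsGb hsGa]
  -- compute ∑' Gb
  have hTb : (∑' p, Gb p) = ∑ j ∈ range (m + 1), (m.choose j : ℝ) * (x * S x j) := by
    have hi : Function.Injective (fun q : ℕ × ℕ => (q.1, q.2 + 1)) := by
      rintro ⟨a, b⟩ ⟨c, d⟩ h
      simp only [Prod.mk.injEq] at h
      exact Prod.ext h.1 (by omega)
    have hzero : Function.support Gb ⊆ Set.range (fun q : ℕ × ℕ => (q.1, q.2 + 1)) := by
      rintro ⟨a, b⟩ hp
      rcases Nat.eq_zero_or_pos b with hb | hb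
      · exact absurd (by simp [hGb, hb]) hp
      · have hb' : b - 1 + 1 = b := by omega
        exact ⟨(a, b - 1), by simp [hb']⟩
    have h1 := hi.tsum_eq (f := Gb) hzero
    have hpt : ∀ q : ℕ × ℕ, Gb (q.1, q.2 + 1)
        = ∑ j ∈ range (m + 1), (m.choose j : ℝ) * (x * g x j q) := by
      rintro ⟨a, b⟩
      simp only [hGb, g]
      have e1 : ((b + 1 : ℕ) : ℝ) - a = ((b : ℝ) - a) + 1 := by push_cast; ring
      rw [e1, add_pow, Finset.sum_mul, Finset.sum_mul, Finset.sum_div]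
      refine Finset.sum_congr rfl fun j hj => ?_
      rw [one_pow, Nat.factorial_succ, show a + (b + 1) = (a + b) + 1 by omega, pow_succ]
      have ha := fact_ne a
      have hb := fact_ne b
      have hb1 : ((b : ℝ) + 1) ≠ 0 := by positivity
      push_cast
      field_simp
    calc (∑' p, Gb p) = ∑' q : ℕ × ℕ, Gb (q.1, q.2 + 1) := h1.symm
      _ = ∑' q : ℕ × ℕ, ∑ j ∈ range (m + 1), (m.choose j : ℝ) * (x * g x j q) :=
          tsum_congr hpt
      _ = ∑ j ∈ range (m + 1), ∑' q : ℕ × ℕ, (m.choose j : ℝ) * (x * g x j q) :=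
          Summable.tsum_finsetSum (fun j _ => ((summable_g x hx j).mul_left x).mul_left _)
      _ = ∑ j ∈ range (m + 1), (m.choose j : ℝ) * (x * S x j) := by
          refine Finset.sum_congr rfl fun j _ => ?_
          rw [tsum_mul_left, tsum_mul_left, S]
  -- compute ∑' Ga
  have hTa : (∑' p, Ga p) = ∑ j ∈ range (m + 1),
      (m.choose j : ℝ) * ((-1 : ℝ) ^ (m - j) * (x * S x j)) := by
    have hi : Function.Injective (fun q : ℕ × ℕ => (q.1 + 1, q.2)) := by
      rintro ⟨a, b⟩ ⟨c, d⟩ h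
      simp only [Prod.mk.injEq] at h
      exact Prod.ext (by omega) h.2
    have hzero : Function.support Ga ⊆ Set.range (fun q : ℕ × ℕ => (q.1 + 1, q.2)) := by
      rintro ⟨a, b⟩ hp
      rcases Nat.eq_zero_or_pos a with ha | ha
      · exact absurd (by simp [hGa, ha]) hp
      · have ha' : a - 1 + 1 = a := by omega
        exact ⟨(a - 1, b), by simp [ha']⟩
    have h1 := hi.tsum_eq (f := Ga) hzero
    have hpt : ∀ q : ℕ × ℕ, Ga (q.1 + 1, q.2)
        = ∑ j ∈ range (m + 1), (m.choose j : ℝ) * ((-1 : ℝ) ^ (m - j) * (x * g x j q)) := by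
      rintro ⟨a, b⟩
      simp only [hGa, g]
      have e1 : ((b : ℕ) : ℝ) - (a + 1 : ℕ) = ((b : ℝ) - a) + (-1) := by push_cast; ring
      rw [e1, add_pow, Finset.sum_mul, Finset.sum_mul, Finset.sum_div]
      refine Finset.sum_congr rfl fun j hj => ?_
      rw [Nat.factorial_succ, show (a + 1) + b = (a + b) + 1 by omega, pow_succ]
      have ha := fact_ne a
      have hb := fact_ne b
      have ha1 : ((a : ℝ) + 1) ≠ 0 := by positivity
      push_cast
      field_simp
    calc (∑' p, Ga p) = ∑' q : ℕ × ℕ, Ga (q.1 + 1, q.2) := h1.symm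
      _ = ∑' q : ℕ × ℕ, ∑ j ∈ range (m + 1),
            (m.choose j : ℝ) * ((-1 : ℝ) ^ (m - j) * (x * g x j q)) := tsum_congr hpt
      _ = ∑ j ∈ range (m + 1), ∑' q : ℕ × ℕ,
            (m.choose j : ℝ) * ((-1 : ℝ) ^ (m - j) * (x * g x j q)) :=
          Summable.tsum_finsetSum (fun j _ => (((summable_g x hx j).mul_left x).mul_left _).mul_left _)
      _ = ∑ j ∈ range (m + 1), (m.choose j : ℝ) * ((-1 : ℝ) ^ (m - j) * (x * S x j)) := by
          refine Finset.sum_congr rfl fun j _ => ?_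
          rw [tsum_mul_left, tsum_mul_left, tsum_mul_left, S]
  rw [hS, hTb, hTa, ← Finset.sum_sub_distrib, Finset.mul_sum]
  exact Finset.sum_congr rfl fun j _ => by ring

lemma sum_pair (F : ℕ → ℝ) (k : ℕ) :
    ∑ j ∈ range (2 * k + 2), F j = ∑ i ∈ range (k + 1), (F (2 * i) + F (2 * i + 1)) := by
  induction k with
  | zero => simp [Finset.sum_range_succ]
  | succ k ih =>
    have h1 : ∑ i ∈ range (k + 1 + 1), (F (2 * i) + F (2 * i + 1))
        = ∑ i ∈ range (k + 1), (F (2 * i) + F (2 * i + 1)) + (F (2 * (k + 1)) + F (2 * (k + 1) + 1)) :=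
      Finset.sum_range_succ _ _
    rw [show 2 * (k + 1) + 2 = (2 * k + 2) + 1 + 1 by ring, Finset.sum_range_succ,
      Finset.sum_range_succ, ih, h1, show 2 * (k + 1) = 2 * k + 2 by ring]
    ring

/-- the polynomials -/
noncomputable def pp : ℕ → Polynomial ℝ
  | 0 => 1
  | k + 1 => Polynomial.X * ∑ i ∈ (Finset.range (k + 1)).attach,
      (((2 * k + 1).choose (2 * i.1) : ℝ)) • pp i.1
  decreasing_by
    have := i.2
    simp only [Finset.mem_range] at this
    omega

lemma pp_zero : pp 0 = 1 := by rw [pp]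

lemma pp_succ (k : ℕ) : pp (k + 1)
    = Polynomial.X * ∑ i ∈ Finset.range (k + 1), (((2 * k + 1).choose (2 * i) : ℝ)) • pp i := by
  rw [pp]
  congr 1
  exact Finset.sum_attach (Finset.range (k + 1))
    (fun i => (((2 * k + 1).choose (2 * i) : ℝ)) • pp i)

lemma S_even_succ (x : ℝ) (hx : 0 ≤ x) (k : ℕ) :
    S x (2 * (k + 1)) = (2 * x) * ∑ i ∈ range (k + 1),
      ((2 * k + 1).choose (2 * i) : ℝ) * S x (2 * i) := by
  have h := S_succ x hx (2 * k + 1)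
  rw [show 2 * (k + 1) = (2 * k + 1) + 1 by ring, h,
    show (2 * k + 1) + 1 = 2 * k + 2 by ring, sum_pair]
  have hterm : ∀ i ∈ range (k + 1),
      ((2 * k + 1).choose (2 * i) : ℝ) * (1 - (-1 : ℝ) ^ (2 * k + 1 - 2 * i)) * S x (2 * i)
      + ((2 * k + 1).choose (2 * i + 1) : ℝ) * (1 - (-1 : ℝ) ^ (2 * k + 1 - (2 * i + 1)))
        * S x (2 * i + 1)
      = 2 * (((2 * k + 1).choose (2 * i) : ℝ) * S x (2 * i)) := by
    intro i hi
    simp only [Finset.mem_range] at hi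
    have h1 : (-1 : ℝ) ^ (2 * k + 1 - 2 * i) = -1 :=
      Odd.neg_one_pow ⟨k - i, by omega⟩
    have h2 : (-1 : ℝ) ^ (2 * k + 1 - (2 * i + 1)) = 1 :=
      Even.neg_one_pow ⟨k - i, by omega⟩
    rw [h1, h2]
    ring
  rw [Finset.sum_congr rfl hterm, ← Finset.mul_sum, ← mul_assoc]
  ring

lemma S_even (x : ℝ) (hx : 0 ≤ x) (k : ℕ) :
    S x (2 * k) = Real.exp (2 * x) * (pp k).eval (2 * x) := by
  induction k using Nat.strong_induction_on with
  | _ k ih =>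
    match k with
    | 0 => simp [S_zero x hx, pp_zero]
    | k + 1 =>
      rw [S_even_succ x hx k, pp_succ]
      simp only [Polynomial.eval_mul, Polynomial.eval_X, Polynomial.eval_finset_sum,
        Polynomial.eval_smul, smul_eq_mul]
      have hterm : ∀ i ∈ Finset.range (k + 1),
          2 * x * (((2 * k + 1).choose (2 * i) : ℝ) * S x (2 * i))
          = Real.exp (2 * x) * (2 * x * (((2 * k + 1).choose (2 * i) : ℝ)
              * Polynomial.eval (2 * x) (pp i))) := by
        intro i hi
        simp only [Finset.mem_range] at hi
        rw [ih i (by omega)]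
        ring
      rw [Finset.mul_sum, Finset.sum_congr rfl hterm, ← Finset.mul_sum]
      congr 1
      exact (Finset.mul_sum _ _ _).symm

lemma pp_facts (k : ℕ) :
    (∀ i : ℕ, k < i → (pp k).coeff i = 0) ∧
    ((pp k).coeff 0 = if k = 0 then 1 else 0) ∧
    (∀ i : ℕ, 1 ≤ i → i ≤ k → 0 < (pp k).coeff i) := by
  induction k using Nat.strong_induction_on with
  | _ k ih =>
    match k with
    | 0 =>
      refine ⟨fun i hi => ?_, by simp [pp_zero], fun i h1 h2 => by omega⟩
      rw [pp_zero, Polynomial.coeff_one, if_neg (by omega : ¬ i = 0)]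
    | k + 1 =>
      have hnon : ∀ i, i < k + 1 → ∀ j, 0 ≤ (pp i).coeff j := by
        intro i hi j
        obtain ⟨h1, h2, h3⟩ := ih i hi
        rcases Nat.eq_zero_or_pos j with rfl | hj
        · rw [h2]; split <;> norm_num
        · rcases le_or_gt j i with hji | hji
          · exact (h3 j hj hji).le
          · rw [h1 j hji]
      set q := ∑ i ∈ Finset.range (k + 1), (((2 * k + 1).choose (2 * i) : ℝ)) • pp i with hq
      have hcoeffq : ∀ j, q.coeff j
          = ∑ i ∈ Finset.range (k + 1), ((2 * k + 1).choose (2 * i) : ℝ) * (pp i).coeff j := by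
        intro j
        rw [hq, Polynomial.finset_sum_coeff]
        exact Finset.sum_congr rfl fun i _ => by rw [Polynomial.coeff_smul, smul_eq_mul]
      have hXq : ∀ j, (pp (k + 1)).coeff (j + 1) = q.coeff j := by
        intro j; rw [pp_succ, ← hq, Polynomial.coeff_X_mul]
      have hXq0 : (pp (k + 1)).coeff 0 = 0 := by
        rw [pp_succ, ← hq, Polynomial.mul_coeff_zero, Polynomial.coeff_X_zero, zero_mul]
      have hchoosepos : ∀ i, i < k + 1 → (0 : ℝ) < ((2 * k + 1).choose (2 * i) : ℝ) := by
        intro i hi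
        exact_mod_cast Nat.choose_pos (by omega)
      refine ⟨?_, by simp [hXq0], ?_⟩
      · intro i hi
        obtain ⟨j, rfl⟩ : ∃ j, i = j + 1 := ⟨i - 1, by omega⟩
        rw [hXq, hcoeffq]
        refine Finset.sum_eq_zero fun l hl => ?_
        simp only [Finset.mem_range] at hl
        rw [(ih l (by omega)).1 j (by omega), mul_zero]
      · intro i h1 h2
        obtain ⟨j, rfl⟩ : ∃ j, i = j + 1 := ⟨i - 1, by omega⟩
        rw [hXq, hcoeffq]
        refine Finset.sum_pos' (fun l hl => ?_) ?_
        · simp only [Finset.mem_range] at hl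
          exact mul_nonneg (hchoosepos l hl).le (hnon l hl j)
        · rcases Nat.eq_zero_or_pos j with rfl | hj
          · refine ⟨0, by simp, ?_⟩
            have h0 : (pp 0).coeff 0 = 1 := by simp [(ih 0 (by omega)).2.1]
            rw [h0, mul_one]
            exact hchoosepos 0 (by omega)
          · have hjk : j < k + 1 := by omega
            refine ⟨j, by simp only [Finset.mem_range]; omega, ?_⟩
            exact mul_pos (hchoosepos j hjk) ((ih j hjk).2.2 j hj le_rfl)

lemma pp_natDegree (k : ℕ) : (pp k).natDegree = k := by
  match k with
  | 0 => rw [pp_zero]; exact Polynomial.natDegree_one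
  | k + 1 =>
    have hle : (pp (k + 1)).natDegree ≤ k + 1 :=
      Polynomial.natDegree_le_iff_coeff_eq_zero.mpr fun N hN => (pp_facts (k + 1)).1 N hN
    exact Polynomial.natDegree_eq_of_le_of_coeff_ne_zero hle
      (ne_of_gt ((pp_facts (k + 1)).2.2 (k + 1) (by omega) le_rfl))

/-- the reindexing bijection -/
def e : ℤ × ℕ ≃ ℕ × ℕ where
  toFun q := (q.2 + (-q.1).toNat, q.2 + q.1.toNat)
  invFun p := ((p.2 : ℤ) - p.1, min p.1 p.2)
  left_inv := by
    rintro ⟨n, m⟩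
    refine Prod.ext ?_ ?_ <;> simp only <;> omega
  right_inv := by
    rintro ⟨a, b⟩
    refine Prod.ext ?_ ?_ <;> simp only <;> omega

lemma g_e (x : ℝ) (m : ℕ) (q : ℤ × ℕ) :
    g x m (e q) = (q.1 : ℝ) ^ m *
      (x ^ (2 * q.2 + q.1.natAbs) / (q.2.factorial * (q.2 + q.1.natAbs).factorial)) := by
  obtain ⟨n, mm⟩ := q
  have hA : ((mm + n.toNat : ℕ) : ℝ) - ((mm + (-n).toNat : ℕ) : ℝ) = (n : ℝ) := by
    have hz : ((mm + n.toNat : ℕ) : ℤ) - ((mm + (-n).toNat : ℕ) : ℤ) = n := by omega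
    calc ((mm + n.toNat : ℕ) : ℝ) - ((mm + (-n).toNat : ℕ) : ℝ)
        = ((((mm + n.toNat : ℕ) : ℤ) - ((mm + (-n).toNat : ℕ) : ℤ) : ℤ) : ℝ) := by
          push_cast; ring
      _ = (n : ℝ) := by rw [hz]
  have hB : (mm + (-n).toNat) + (mm + n.toNat) = 2 * mm + n.natAbs := by omega
  have hC : (((mm + (-n).toNat).factorial : ℕ) : ℝ) * (((mm + n.toNat).factorial : ℕ) : ℝ)
      = ((mm.factorial : ℕ) : ℝ) * (((mm + n.natAbs).factorial : ℕ) : ℝ) := by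
    rcases le_or_gt 0 n with hn | hn
    · have h1 : mm + (-n).toNat = mm := by omega
      have h2 : mm + n.toNat = mm + n.natAbs := by omega
      rw [h1, h2]
    · have h1 : mm + (-n).toNat = mm + n.natAbs := by omega
      have h2 : mm + n.toNat = mm := by omega
      rw [h1, h2, mul_comm]
  simp only [g, e, Equiv.coe_fn_mk]
  rw [hA, hB, hC]
  ring

lemma tsum_besselI (m : ℕ) (t : ℝ) (ht : 0 ≤ t) :
    ∑' n : ℤ, (n : ℝ) ^ m * besselI n t = S (t / 2) m := by
  have hx : (0:ℝ) ≤ t / 2 := by linarith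
  set H : ℤ × ℕ → ℝ := fun q => (q.1 : ℝ) ^ m *
    ((t / 2) ^ (2 * q.2 + q.1.natAbs)
      / (q.2.factorial * (q.2 + q.1.natAbs).factorial)) with hH
  have hHe : ∀ q, H q = g (t / 2) m (e q) := fun q => (g_e (t / 2) m q).symm
  have hs : Summable H := by
    refine Summable.congr ?_ (fun q => (hHe q).symm)
    exact (e.summable_iff (f := g (t / 2) m)).mpr (summable_g (t / 2) hx m)
  have h1 : ∀ n : ℤ, (n : ℝ) ^ m * besselI n t = ∑' mm : ℕ, H (n, mm) := by
    intro n
    rw [besselI, ← tsum_mul_left]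
  calc ∑' n : ℤ, (n : ℝ) ^ m * besselI n t
      = ∑' n : ℤ, ∑' mm : ℕ, H (n, mm) := tsum_congr h1
    _ = ∑' q : ℤ × ℕ, H q := (Summable.tsum_prod' hs hs.prod_factor).symm
    _ = ∑' q : ℤ × ℕ, g (t / 2) m (e q) := tsum_congr hHe
    _ = ∑' p : ℕ × ℕ, g (t / 2) m p := e.tsum_eq (g (t / 2) m)
    _ = S (t / 2) m := rfl

end BesselAux

open BesselAux in
theorem besselI_even_moments (k : ℕ) :
    ∃ p : Polynomial ℝ,
      p.natDegree = k ∧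
      (k = 0 → p = 1) ∧
      (1 ≤ k → p.eval 0 = 0) ∧
      (∀ i : ℕ, 1 ≤ i → i ≤ k → 0 < p.coeff i) ∧
      ∀ t : ℝ, 0 < t →
        (∑' n : ℤ, (n : ℝ) ^ (2 * k) * besselI n t = Real.exp t * p.eval t) ∧
        (∑' n : ℤ, (n : ℝ) ^ (2 * k + 1) * besselI n t = 0) := by
  refine ⟨pp k, pp_natDegree k, fun hk => by rw [hk, pp_zero], fun hk => ?_,
    fun i h1 h2 => (pp_facts k).2.2 i h1 h2, fun t ht => ⟨?_, ?_⟩⟩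
  · rw [← Polynomial.coeff_zero_eq_eval_zero, (pp_facts k).2.1, if_neg (by omega)]
  · have hx : (0:ℝ) ≤ t / 2 := by linarith
    rw [tsum_besselI (2 * k) t ht.le, S_even (t / 2) hx k, show 2 * (t / 2) = t by ring]
  · rw [tsum_besselI (2 * k + 1) t ht.le, S_odd]

-- dbg
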